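/- Any packing of N n-dimensional subspaces of R^m achieving equality in the simplex bound min d_c² = (n(m−n)/m)·N/(N−1) must satisfy N ≤ m(m+1)/2. -/

import Mathlib

open Matrix Finset

lemma trace_mul_self_eq_sum_sq {m : ℕ} (A : Matrix (Fin m) (Fin m) ℝ) (hA : Aᵀ = A) :
    Matrix.trace (A * A) = ∑ i, ∑ j, (A i j)^2 := by
  simp only [Matrix.trace, Matrix.diag, Matrix.mul_apply]
  refine Finset.sum_congr rfl fun i _ => Finset.sum_congr rfl fun j _ => ?_
  have : A j i = A i j := by nth_rewrite 1 [← hA]; rw [Matrix.transpose_apply]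
  rw [this]; ring

lemma eq_zero_of_trace_mul_self {m : ℕ} (A : Matrix (Fin m) (Fin m) ℝ) (hA : Aᵀ = A)
    (h : Matrix.trace (A * A) = 0) : A = 0 := by
  rw [trace_mul_self_eq_sum_sq A hA] at h
  ext i j
  have h1 := (Finset.sum_eq_zero_iff_of_nonneg (fun i _ => Finset.sum_nonneg
    (fun j _ => sq_nonneg (A i j)))).mp h i (Finset.mem_univ i)
  have h2 := (Finset.sum_eq_zero_iff_of_nonneg (fun j _ => sq_nonneg (A i j))).mp h1 j
    (Finset.mem_univ j)
  simpa using pow_eq_zero_iff (n := 2) (by norm_num) |>.mp h2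

lemma card_pairs (m : ℕ) :
    2 * Fintype.card {p : Fin m × Fin m // p.1 ≤ p.2} = m * m + m := by
  classical
  rw [Fintype.card_subtype]
  set s₁ := Finset.univ.filter (fun p : Fin m × Fin m => p.1 ≤ p.2) with hs₁
  set s₂ := Finset.univ.filter (fun p : Fin m × Fin m => p.2 ≤ p.1) with hs₂
  have hcards : s₁.card = s₂.card := by
    apply Finset.card_bij (fun p _ => p.swap)
    · intro a ha; simp [hs₁, hs₂] at *; exact ha
    · intro a _ b _ h; exact Prod.swap_injective h
    · intro b hb; exact ⟨b.swap, by simp [hs₁, hs₂] at *; exact hb, by simp⟩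
  have hunion : s₁ ∪ s₂ = Finset.univ := by
    ext p; simp [hs₁, hs₂, le_total]
  have hinter : s₁ ∩ s₂ = Finset.univ.filter (fun p : Fin m × Fin m => p.1 = p.2) := by
    ext p; simp only [hs₁, hs₂, Finset.mem_inter, Finset.mem_filter, Finset.mem_univ, true_and]
    constructor
    · rintro ⟨h1, h2⟩; exact le_antisymm h1 h2
    · rintro h; exact ⟨le_of_eq h, le_of_eq h.symm⟩
  have hdiag : (Finset.univ.filter (fun p : Fin m × Fin m => p.1 = p.2)).card = m := by
    have : Finset.univ.filter (fun p : Fin m × Fin m => p.1 = p.2)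
        = Finset.univ.image (fun i : Fin m => (i, i)) := by
      ext p; simp only [Finset.mem_filter, Finset.mem_univ, true_and, Finset.mem_image]
      constructor
      · intro h; exact ⟨p.1, by rw [Prod.ext_iff]; exact ⟨rfl, h⟩⟩
      · rintro ⟨i, rfl⟩; simp
    rw [this, Finset.card_image_of_injective _ (fun a b h => (Prod.ext_iff.mp h).1),
      Finset.card_univ, Fintype.card_fin]
  have key := Finset.card_union_add_card_inter s₁ s₂
  rw [hunion, hinter, hdiag, ← hcards, Finset.card_univ] at key
  simp only [Fintype.card_prod, Fintype.card_fin] at key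
  omega

/-- Any packing of `N` `n`-dimensional subspaces of `ℝ^m` achieving equality in
the simplex bound (all pairwise squared chordal distances at least
`(n(m-n)/m)·N/(N-1)`) must have `N ≤ m(m+1)/2`. -/
theorem simplex_bound_equality_card {m n N : ℕ} (hN : 2 ≤ N)
    (P : Fin N → Matrix (Fin m) (Fin m) ℝ)
    (hsym : ∀ k, (P k)ᵀ = P k) (hidem : ∀ k, P k * P k = P k)
    (htr : ∀ k, Matrix.trace (P k) = (n : ℝ)) (hinj : Function.Injective P)
    (heq : ∀ i j, i ≠ j →
      ((n : ℝ) * ((m : ℝ) - n) / m) * ((N : ℝ) / ((N : ℝ) - 1)) ≤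
        (n : ℝ) - Matrix.trace (P i * P j)) :
    N ≤ m * (m + 1) / 2 := by
  classical
  have i0 : Fin N := ⟨0, by omega⟩
  have i1 : Fin N := ⟨1, by omega⟩
  have hne01 : (⟨0, by omega⟩ : Fin N) ≠ ⟨1, by omega⟩ := by
    simp [Fin.ext_iff]
  -- m > 0
  rcases Nat.eq_zero_or_pos m with hm0 | hm
  · exact absurd (hinj (show P ⟨0, by omega⟩ = P ⟨1, by omega⟩ by
      subst hm0; ext i j; exact i.elim0)) hne01
  have hmR : (0:ℝ) < m := by exact_mod_cast hm
  have hNR : (0:ℝ) < (N:ℝ) - 1 := by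
    have : (2:ℝ) ≤ N := by exact_mod_cast hN
    linarith
  have hNR0 : (0:ℝ) < (N:ℝ) := by linarith
  set μ : ℝ := (n:ℝ)/m with hμ
  set Q : Fin N → Matrix (Fin m) (Fin m) ℝ := fun k => P k - μ • 1 with hQdef
  have hQsym : ∀ k, (Q k)ᵀ = Q k := by
    intro k
    simp [hQdef, Matrix.transpose_sub, Matrix.transpose_smul, hsym k]
  have hQtr : ∀ i j, Matrix.trace (Q i * Q j) = Matrix.trace (P i * P j) - (n:ℝ)^2/m := by
    intro i j
    have hexp : Q i * Q j = P i * P j - μ • P j - μ • P i + (μ*μ) • (1 : Matrix (Fin m) (Fin m) ℝ) := by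
      simp only [hQdef, Matrix.sub_mul, Matrix.mul_sub, Matrix.smul_mul, Matrix.mul_smul,
        Matrix.one_mul, Matrix.mul_one, smul_smul]
      module
    rw [hexp]
    simp only [Matrix.trace_add, Matrix.trace_sub, Matrix.trace_smul, htr, Matrix.trace_one,
      smul_eq_mul, Fintype.card_fin]
    rw [hμ]
    field_simp
    ring
  set s : ℝ := (n:ℝ) - (n:ℝ)^2/m with hsdef
  have hQdiagtr : ∀ i, Matrix.trace (Q i * Q i) = s := by
    intro i
    rw [hQtr i i, hidem i, htr i]
  -- s > 0
  have hs0 : 0 ≤ s := by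
    rw [← hQdiagtr ⟨0, by omega⟩, trace_mul_self_eq_sum_sq _ (hQsym _)]
    positivity
  have hs : 0 < s := by
    rcases lt_or_eq_of_le hs0 with h | h
    · exact h
    · exfalso
      have hz : ∀ k : Fin N, Q k = 0 := by
        intro k
        exact eq_zero_of_trace_mul_self _ (hQsym k) (by rw [hQdiagtr k, ← h])
      have : P ⟨0, by omega⟩ = P ⟨1, by omega⟩ := by
        have e0 := hz ⟨0, by omega⟩
        have e1 := hz ⟨1, by omega⟩
        rw [hQdef] at e0 e1
        simp only [sub_eq_zero] at e0 e1
        rw [e0, e1]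
      exact hne01 (hinj this)
  have hn : (n:ℝ) ≠ 0 := by
    intro h
    rw [hsdef, h] at hs
    norm_num at hs
  set γ : ℝ := s * ((N:ℝ) / ((N:ℝ) - 1)) with hγdef
  have hγpos : 0 < γ := by
    apply mul_pos hs
    exact div_pos hNR0 hNR
  have hconst : (n:ℝ) * ((m:ℝ) - n) / m * ((N:ℝ) / ((N:ℝ) - 1)) = γ := by
    have hns : (n:ℝ) * ((m:ℝ) - n) / m = s := by
      rw [hsdef]; field_simp
    rw [hγdef, hns]
  -- the upper bound on off-diagonal traces
  have hle : ∀ i j, i ≠ j → Matrix.trace (Q i * Q j) ≤ s - γ := by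
    intro i j hij
    have h1 := heq i j hij
    rw [hconst] at h1
    rw [hQtr i j, hsdef]
    linarith
  -- sum identity
  have hsum_nonneg : (0:ℝ) ≤ ∑ i, ∑ j, Matrix.trace (Q i * Q j) := by
    have : ∑ i, ∑ j, Matrix.trace (Q i * Q j) = Matrix.trace ((∑ i, Q i) * (∑ j, Q j)) := by
      rw [Finset.sum_mul_sum, Matrix.trace_sum]
      exact Finset.sum_congr rfl fun i _ => (Matrix.trace_sum _ _).symm
    rw [this, trace_mul_self_eq_sum_sq _ (by
      rw [Matrix.transpose_sum]
      exact Finset.sum_congr rfl fun k _ => hQsym k)]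
    positivity
  -- split into diagonal and off-diagonal
  have hsplit : ∑ i, ∑ j, Matrix.trace (Q i * Q j)
      = (N:ℝ) * s + ∑ p ∈ Finset.univ.offDiag, Matrix.trace (Q p.1 * Q p.2) := by
    rw [← Finset.sum_product']
    rw [← Finset.diag_union_offDiag (Finset.univ : Finset (Fin N)),
      Finset.sum_union (Finset.disjoint_diag_offDiag _)]
    congr 1
    rw [Finset.sum_diag]
    rw [Finset.sum_congr rfl (fun i _ => hQdiagtr i)]
    simp [mul_comm]
  have hcard_off : ((Finset.univ.offDiag : Finset (Fin N × Fin N)).card : ℝ)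
      = (N:ℝ) * (N:ℝ) - N := by
    rw [Finset.offDiag_card]
    simp only [Finset.card_univ, Fintype.card_fin]
    have : N ≤ N * N := Nat.le_mul_of_pos_left N (by omega)
    push_cast [Nat.cast_sub this]
    ring
  have htotal : ((N:ℝ) * (N:ℝ) - N) * (s - γ) = -((N:ℝ) * s) := by
    rw [hγdef]
    field_simp
    ring
  -- exact equality off the diagonal
  have hT : ∀ i j, i ≠ j → Matrix.trace (P i * P j) = (n:ℝ) - γ := by
    have hall : ∀ p ∈ (Finset.univ.offDiag : Finset (Fin N × Fin N)),
        Matrix.trace (Q p.1 * Q p.2) = s - γ := by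
      by_contra hcon
      push_neg at hcon
      obtain ⟨p, hp, hpne⟩ := hcon
      have hplt : Matrix.trace (Q p.1 * Q p.2) < s - γ :=
        lt_of_le_of_ne (hle p.1 p.2 (Finset.mem_offDiag.mp hp).2.2) hpne
      have hlt : ∑ q ∈ Finset.univ.offDiag, Matrix.trace (Q q.1 * Q q.2)
          < ∑ q ∈ (Finset.univ.offDiag : Finset (Fin N × Fin N)), (s - γ) := by
        apply Finset.sum_lt_sum
        · intro q hq; exact hle q.1 q.2 (Finset.mem_offDiag.mp hq).2.2
        · exact ⟨p, hp, hplt⟩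
      rw [Finset.sum_const, nsmul_eq_mul, hcard_off, htotal] at hlt
      have := hsum_nonneg
      rw [hsplit] at this
      linarith
    intro i j hij
    have hmem : (i, j) ∈ (Finset.univ.offDiag : Finset (Fin N × Fin N)) :=
      Finset.mem_offDiag.mpr ⟨Finset.mem_univ i, Finset.mem_univ j, hij⟩
    have := hall (i, j) hmem
    rw [hQtr i j] at this
    rw [hsdef] at this
    linarith
  -- linear independence of the P's in the space of (coordinates of) symmetric matrices
  let L : Matrix (Fin m) (Fin m) ℝ →ₗ[ℝ] ({p : Fin m × Fin m // p.1 ≤ p.2} → ℝ) :=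
    { toFun := fun A p => A p.1.1 p.1.2
      map_add' := fun A B => rfl
      map_smul' := fun r A => rfl }
  have hLI : LinearIndependent ℝ (fun k => L (P k)) := by
    rw [Fintype.linearIndependent_iff]
    intro c hc j
    have hB : (∑ i, c i • P i) = 0 := by
      have h1 : L (∑ i, c i • P i) = 0 := by
        rw [map_sum]
        simpa [_root_.map_smul] using hc
      have hBsym : (∑ i, c i • P i)ᵀ = ∑ i, c i • P i := by
        rw [Matrix.transpose_sum]
        exact Finset.sum_congr rfl fun k _ => by rw [Matrix.transpose_smul, hsym k]
      ext a b
      rcases le_total a b with hab | hab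
      · exact congrFun h1 ⟨(a, b), hab⟩
      · have h2 := congrFun h1 ⟨(b, a), hab⟩
        have : (∑ i, c i • P i) a b = (∑ i, c i • P i) b a := by
          nth_rewrite 1 [← hBsym]; rw [Matrix.transpose_apply]
        rw [this]
        exact h2
    have hsum0 : ∑ i, c i = 0 := by
      have h1 := congrArg Matrix.trace hB
      rw [Matrix.trace_sum] at h1
      simp only [Matrix.trace_smul, htr, smul_eq_mul, Matrix.trace_zero] at h1
      rw [← Finset.sum_mul] at h1
      exact (mul_eq_zero.mp h1).resolve_right hn
    have h2 : ∑ i, c i * Matrix.trace (P i * P j) = 0 := by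
      have h1 := congrArg (fun B => Matrix.trace (B * P j)) hB
      simp only [Matrix.sum_mul, Matrix.smul_mul, Matrix.trace_sum, Matrix.trace_smul,
        smul_eq_mul, Matrix.zero_mul, Matrix.trace_zero] at h1
      exact h1
    have h3 : ∑ i, c i * (Matrix.trace (P i * P j) - ((n:ℝ) - γ)) = c j * γ := by
      rw [Finset.sum_eq_single j]
      · rw [hidem j, htr j]; ring
      · intro i _ hij
        rw [hT i j hij]; ring
      · intro h; exact absurd (Finset.mem_univ j) h
    have h4 : ∑ i, c i * (Matrix.trace (P i * P j) - ((n:ℝ) - γ))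
        = ∑ i, c i * Matrix.trace (P i * P j) - (∑ i, c i) * ((n:ℝ) - γ) := by
      rw [Finset.sum_mul, ← Finset.sum_sub_distrib]
      exact Finset.sum_congr rfl fun i _ => by ring
    rw [h4, h2, hsum0] at h3
    have : c j * γ = 0 := by linarith
    exact (mul_eq_zero.mp this).resolve_right (ne_of_gt hγpos)
  have hcard := hLI.fintype_card_le_finrank
  rw [Module.finrank_fintype_fun_eq_card, Fintype.card_fin] at hcard
  have hp := card_pairs m
  have hmm : m * (m + 1) = m * m + m := by ring
  omega
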